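/- For every φ ∈ P, every i ∈ I, and every N ∈ ℕ such that pderiv (i,n) (D φ) = 0 for all n ≥ N, one has ∑_{n=0}^{N−1} (−1)^n D^n (pderiv (i,n) (D φ)) = 0. That is, the variational derivative of a total derivative vanishes: δ(∂φ)/δu_i = 0 for all i (Proposition 4.5(2), in the purely even case). -/
import Mathlib


open MvPolynomial

lemma comm_zero {I : Type*}
    (D : Derivation ℂ (MvPolynomial (I × ℕ) ℂ) (MvPolynomial (I × ℕ) ℂ))
    (hD : ∀ (i : I) (n : ℕ), D (X (i, n)) = X (i, n + 1)) (i : I) (p : MvPolynomial (I × ℕ) ℂ) :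
    pderiv (i, 0) (D p) = D (pderiv (i, 0) p) := by
  classical
  have h : ⁅(pderiv (i, 0) : Derivation ℂ (MvPolynomial (I × ℕ) ℂ) (MvPolynomial (I × ℕ) ℂ)),
      D⁆ = 0 := by
    apply derivation_ext
    rintro ⟨j, m⟩
    rw [Derivation.commutator_apply, hD j m]
    simp only [pderiv_X, Pi.single_apply, Derivation.zero_apply, Prod.mk.injEq]
    split_ifs with h1 h2 h3 <;> simp_all
  have := congrFun (congrArg DFunLike.coe h) p
  rw [Derivation.commutator_apply] at this
  simp only [Derivation.zero_apply] at this
  exact sub_eq_zero.mp this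

lemma comm_succ {I : Type*}
    (D : Derivation ℂ (MvPolynomial (I × ℕ) ℂ) (MvPolynomial (I × ℕ) ℂ))
    (hD : ∀ (i : I) (n : ℕ), D (X (i, n)) = X (i, n + 1)) (i : I) (n : ℕ)
    (p : MvPolynomial (I × ℕ) ℂ) :
    pderiv (i, n + 1) (D p) = D (pderiv (i, n + 1) p) + pderiv (i, n) p := by
  classical
  have h : ⁅(pderiv (i, n + 1) : Derivation ℂ (MvPolynomial (I × ℕ) ℂ) (MvPolynomial (I × ℕ) ℂ)),
      D⁆ = pderiv (i, n) := by
    apply derivation_ext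
    rintro ⟨j, m⟩
    rw [Derivation.commutator_apply, hD j m]
    simp only [pderiv_X, Pi.single_apply, Prod.mk.injEq]
    split_ifs with h1 h2 h3 <;> simp_all
  have := congrFun (congrArg DFunLike.coe h) p
  rw [Derivation.commutator_apply] at this
  rw [eq_add_of_sub_eq this, add_comm]

theorem stmt_2 {I : Type*}
    (D : Derivation ℂ (MvPolynomial (I × ℕ) ℂ) (MvPolynomial (I × ℕ) ℂ))
    (hD : ∀ (i : I) (n : ℕ), D (X (i, n)) = X (i, n + 1)) :
    ∀ (φ : MvPolynomial (I × ℕ) ℂ) (i : I) (N : ℕ),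
      (∀ n : ℕ, N ≤ n → (pderiv (i, n)) (D φ) = 0) →
      ∑ n ∈ Finset.range N, ((-1 : ℂ) ^ n) • (⇑D)^[n] ((pderiv (i, n)) (D φ)) = 0 := by
  intro φ i N hN
  have hDadd : ∀ (k : ℕ) (x y : MvPolynomial (I × ℕ) ℂ),
      (⇑D)^[k] (x + y) = (⇑D)^[k] x + (⇑D)^[k] y := by
    intro k
    induction k with
    | zero => intro x y; simp
    | succ k ih =>
      intro x y
      rw [Function.iterate_succ_apply, map_add, ih,
        ← Function.iterate_succ_apply, ← Function.iterate_succ_apply]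
  have hDzero : ∀ k : ℕ, (⇑D)^[k] (0 : MvPolynomial (I × ℕ) ℂ) = 0 := by
    intro k
    induction k with
    | zero => simp
    | succ k ih => rw [Function.iterate_succ_apply, map_zero, ih]
  -- finiteness bound
  obtain ⟨M, hM⟩ : ∃ M : ℕ, ∀ n, M ≤ n → pderiv (i, n) φ = 0 := by
    refine ⟨(φ.vars.image Prod.snd).sup id + 1, fun n hn => ?_⟩
    apply pderiv_eq_zero_of_notMem_vars
    intro hmem
    have : n ≤ (φ.vars.image Prod.snd).sup id :=
      Finset.le_sup (f := id) (Finset.mem_image_of_mem Prod.snd hmem)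
    omega
  -- telescoping identity
  have key : ∀ K : ℕ,
      ∑ n ∈ Finset.range (K + 1), ((-1 : ℂ) ^ n) • (⇑D)^[n] ((pderiv (i, n)) (D φ))
        = ((-1 : ℂ) ^ K) • (⇑D)^[K + 1] (pderiv (i, K) φ) := by
    intro K
    induction K with
    | zero => simp [comm_zero D hD i φ]
    | succ K ih =>
      rw [Finset.sum_range_succ, ih, comm_succ D hD i K φ, hDadd, smul_add]
      have h1 : (⇑D)^[K + 1] (D (pderiv (i, K + 1) φ)) = (⇑D)^[K + 2] (pderiv (i, K + 1) φ) := by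
        rw [← Function.iterate_succ_apply]
      rw [h1]
      have h2 : ((-1 : ℂ) ^ (K + 1)) • (⇑D)^[K + 1] (pderiv (i, K) φ)
          = -(((-1 : ℂ) ^ K) • (⇑D)^[K + 1] (pderiv (i, K) φ)) := by
        rw [← neg_smul]; ring_nf
      rw [h2]
      abel
  obtain ⟨K', hK'⟩ : ∃ K', max N (M + 1) = K' + 1 := ⟨max N (M + 1) - 1, by omega⟩
  have hext : ∑ n ∈ Finset.range N, ((-1 : ℂ) ^ n) • (⇑D)^[n] ((pderiv (i, n)) (D φ))
      = ∑ n ∈ Finset.range (max N (M + 1)), ((-1 : ℂ) ^ n) • (⇑D)^[n] ((pderiv (i, n)) (D φ)) := by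
    rw [← Finset.sum_range_add_sum_Ico _ (le_max_left N (M + 1))]
    have : ∑ n ∈ Finset.Ico N (max N (M + 1)),
        ((-1 : ℂ) ^ n) • (⇑D)^[n] ((pderiv (i, n)) (D φ)) = 0 := by
      apply Finset.sum_eq_zero
      intro n hn
      rw [hN n (Finset.mem_Ico.mp hn).1, hDzero, smul_zero]
    rw [this, add_zero]
  rw [hext, hK', key K', hM K' (by omega), hDzero, smul_zero]
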